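/- For a bounded linear operator T : X → Y of finite rank k between normed spaces, the Hilbert-space factorization constant satisfies γ₂(T) ≤ √k · ‖T‖. -/

import Mathlib

set_option maxHeartbeats 1600000

open Module RealInnerProductSpace

lemma key_lambda (s a b t : ℝ) (hs : 1 < s) (ha : 1 ≤ a) (hb : 0 < b)
    (hab : a^2 + (s^2-1)*b^2 ≤ s^2) (has : a < s) (ht0 : 0 ≤ t) (ht1 : t ≤ 1) :
    ∃ l : ℝ, 0 ≤ l ∧ l < 1 ∧ (a*t - l*s)^2 + b^2*(1-t^2) ≤ (1-l)^2 := by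
  have hs1 : (0:ℝ) < s^2 - 1 := by nlinarith
  by_cases h : a*t*s ≤ 1
  · refine ⟨0, le_refl _, one_pos, ?_⟩
    have hts : t*s ≤ 1 := by nlinarith
    have h6 : (s^2-1)*b^2*(1-t^2) ≤ (s^2-a^2)*(1-t^2) := by
      apply mul_le_mul_of_nonneg_right (by nlinarith) (by nlinarith)
    have h7 : (0:ℝ) ≤ (a^2-1)*(1-(s*t)^2) := by
      apply mul_nonneg (by nlinarith)
      nlinarith [mul_nonneg (by linarith : (0:ℝ) ≤ s) ht0, hts]
    have final : (s^2-1)*((a*t)^2 + b^2*(1-t^2)) ≤ (s^2-1)*1 := by nlinarith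
    have := le_of_mul_le_mul_left final hs1
    nlinarith
  · push_neg at h
    set l : ℝ := (a*t*s-1)/(s^2-1) with hl
    have hat : a*t < s := by nlinarith
    refine ⟨l, div_nonneg (by linarith) hs1.le, ?_, ?_⟩
    · rw [hl, div_lt_one hs1]
      nlinarith
    · have e1 : (1-l)^2 - ((a*t-l*s)^2 + b^2*(1-t^2)) =
        ((a*t-s)^2 - (s^2-1)*b^2*(1-t^2))/(s^2-1) := by
        rw [hl]; field_simp; ring
      have h3 : (s^2-1)*b^2*(1-t^2) ≤ (s^2-a^2)*(1-t^2) := by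
        apply mul_le_mul_of_nonneg_right (by nlinarith) (by nlinarith)
      have h4 : (a*t-s)^2 - (s^2-a^2)*(1-t^2) = (a-s*t)^2 := by ring
      have h5 : 0 ≤ (a*t-s)^2 - (s^2-1)*b^2*(1-t^2) := by
        nlinarith [sq_nonneg (a-s*t)]
      have := div_nonneg h5 hs1.le
      linarith [e1 ▸ this]


lemma exists_ab (k : ℕ) (hk : 1 ≤ k) (s : ℝ) (hs0 : 0 < s) (hs : (k:ℝ) < s^2) :
    ∃ a b : ℝ, 1 ≤ a ∧ 0 < b ∧ a^2 + (s^2-1)*b^2 ≤ s^2 ∧ a < s ∧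
      1 < a * b^(k-1) := by
  have hk1 : (1:ℝ) ≤ (k:ℝ) := by exact_mod_cast hk
  have hk0 : (0:ℝ) < (k:ℝ) := by linarith
  have hs1 : (1:ℝ) < s^2 := by linarith
  have hsgt1 : 1 < s := by nlinarith
  obtain ⟨ε, hε0, hεhalf, hεs⟩ :
      ∃ ε : ℝ, 0 < ε ∧ ε ≤ 1/2 ∧ ε*(s^2-1) = (s^2-(k:ℝ))/(2*(k:ℝ)) := by
    have hden : (0:ℝ) < 2*(s^2-1)*(k:ℝ) := by nlinarith
    refine ⟨(s^2-(k:ℝ))/(2*(s^2-1)*(k:ℝ)), div_pos (by linarith) hden, ?_, ?_⟩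
    · rw [div_le_iff₀ hden]; nlinarith
    · rw [div_mul_eq_mul_div, div_eq_div_iff hden.ne' (by linarith : (0:ℝ) < 2*(k:ℝ)).ne']; ring
  have hεlt : ε < 1 := by
    linarith
  obtain ⟨a, ha0, ha2⟩ : ∃ a : ℝ, 0 ≤ a ∧ a^2 = 1 + ε*(s^2-1) :=
    ⟨Real.sqrt _, Real.sqrt_nonneg _, Real.sq_sqrt (by nlinarith)⟩
  obtain ⟨b, hb0, hb2⟩ : ∃ b : ℝ, 0 < b ∧ b^2 = 1 - ε :=
    ⟨Real.sqrt _, Real.sqrt_pos.2 (by linarith), Real.sq_sqrt (by linarith)⟩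
  have ha1 : 1 ≤ a := by nlinarith [sq_nonneg (a-1), sq_nonneg (a+1)]
  have has : a < s := by nlinarith
  refine ⟨a, b, ha1, hb0, by nlinarith, has, ?_⟩
  have hcast : ((k-1 : ℕ) : ℝ) = (k:ℝ) - 1 := by
    have := Nat.cast_sub hk (R := ℝ); simpa using this
  have hbern : 1 + (↑(k-1) : ℝ)*(-ε) ≤ (1 + (-ε))^(k-1) :=
    one_add_mul_le_pow (by linarith) _
  rw [hcast] at hbern
  have hbern' : 1 - ((k:ℝ)-1)*ε ≤ (1-ε)^(k-1) := by
    rw [show (1:ℝ)-ε = 1 + (-ε) by ring]; linarith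
  have hb2k : (b^(k-1))^2 = (1-ε)^(k-1) := by
    rw [← pow_mul, mul_comm, pow_mul, hb2]
  have hkey : ((k:ℝ)-1)*ε*(s^2-1) ≤ (s^2-(k:ℝ))/2 := by
    rw [mul_assoc, hεs, mul_comm, div_mul_eq_mul_div, div_le_div_iff₀ (by positivity) two_pos]
    nlinarith
  have hsq : 1 < (a*b^(k-1))^2 := by
    have expand : (a*b^(k-1))^2 = a^2 * (b^(k-1))^2 := by ring
    rw [expand, hb2k, ha2]
    have h1ε : (0:ℝ) < 1 + ε*(s^2-1) := by nlinarith
    have hstep : (1 + ε*(s^2-1)) * (1 - ((k:ℝ)-1)*ε) ≤ (1 + ε*(s^2-1)) * (1-ε)^(k-1) :=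
      mul_le_mul_of_nonneg_left hbern' h1ε.le
    have hlow : 1 < (1 + ε*(s^2-1)) * (1 - ((k:ℝ)-1)*ε) := by nlinarith
    linarith
  have habpos : 0 ≤ a * b^(k-1) := by positivity
  nlinarith



open Module

lemma john (E : Type) [NormedAddCommGroup E] [NormedSpace ℝ E] [FiniteDimensional ℝ E]
    (k : ℕ) (hk : finrank ℝ E = k) :
    ∃ u : EuclideanSpace ℝ (Fin k) ≃L[ℝ] E,
      ‖(u : EuclideanSpace ℝ (Fin k) →L[ℝ] E)‖ ≤ 1 ∧
      ‖(u.symm : E →L[ℝ] EuclideanSpace ℝ (Fin k))‖ ≤ Real.sqrt k := by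
  classical
  set H := EuclideanSpace ℝ (Fin k) with hH
  have hfinH : finrank ℝ H = k := finrank_euclideanSpace_fin
  let bE : Basis (Fin k) ℝ E := Module.finBasisOfFinrankEq ℝ E hk
  let bH : Basis (Fin k) ℝ H := (EuclideanSpace.basisFun (Fin k) ℝ).toBasis
  let d : (H →L[ℝ] E) → ℝ := fun u => (LinearMap.toMatrix bH bE u.toLinearMap).det
  have hdcont : Continuous d := by
    have h1 : Continuous fun u : H →L[ℝ] E =>
        LinearMap.toMatrix bH bE u.toLinearMap := by
      apply LinearMap.continuous_of_finiteDimensional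
        (f := (LinearMap.toMatrix bH bE).toLinearMap.comp
          (ContinuousLinearMap.coeLM ℝ (M := H) (N₃ := E)))
    exact h1.matrix_det
  -- compactness of the unit ball of operators
  have hKc : IsCompact (Metric.closedBall (0 : H →L[ℝ] E) 1) := by
    haveI : FiniteDimensional ℝ (H →L[ℝ] E) := by
      infer_instance
    exact isCompact_closedBall _ _
  obtain ⟨u₀, hu₀K, hmax⟩ := hKc.exists_isMaxOn ⟨0, Metric.mem_closedBall_self zero_le_one⟩
    ((hdcont.abs).continuousOn)
  have hu₀ : ‖u₀‖ ≤ 1 := by rwa [← mem_closedBall_zero_iff]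
  -- a competitor with nonzero determinant
  have hdpos : 0 < |d u₀| := by
    let w : H ≃ₗ[ℝ] E := LinearEquiv.ofFinrankEq _ _ (hfinH.trans hk.symm)
    let wC : H →L[ℝ] E := LinearMap.toContinuousLinearMap w.toLinearMap
    have hdw : d wC ≠ 0 := by
      have hcomp : (LinearMap.toMatrix bE bH w.symm.toLinearMap)
          * (LinearMap.toMatrix bH bE w.toLinearMap) = 1 := by
        rw [← LinearMap.toMatrix_comp bH bE bH]
        simp [LinearMap.toMatrix_id]
      have hdet : (LinearMap.toMatrix bE bH w.symm.toLinearMap).det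
          * (LinearMap.toMatrix bH bE w.toLinearMap).det = 1 := by
        rw [← Matrix.det_mul, hcomp, Matrix.det_one]
      intro h0
      rw [show d wC = (LinearMap.toMatrix bH bE w.toLinearMap).det from rfl] at h0
      rw [h0, mul_zero] at hdet
      exact zero_ne_one hdet
    set c : ℝ := max 1 ‖wC‖ with hc
    have hc1 : 1 ≤ c := le_max_left _ _
    have hcpos : (0:ℝ) < c := lt_of_lt_of_le one_pos hc1
    have hc0 : c ≠ 0 := ne_of_gt hcpos
    have hmemK : c⁻¹ • wC ∈ Metric.closedBall (0 : H →L[ℝ] E) 1 := by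
      rw [mem_closedBall_zero_iff]
      refine le_trans (norm_smul_le c⁻¹ wC) ?_
      rw [Real.norm_eq_abs, abs_of_pos (by positivity)]
      rw [inv_mul_le_one₀ hcpos]
      exact le_max_right _ _
    have hd1 : d (c⁻¹ • wC) = (c⁻¹)^k * d wC := by
      show (LinearMap.toMatrix bH bE (c⁻¹ • wC).toLinearMap).det = _
      have : (c⁻¹ • wC).toLinearMap = c⁻¹ • wC.toLinearMap := rfl
      rw [this, map_smul, Matrix.det_smul]
      simp [Fintype.card_fin]
      left; rfl
    have : 0 < |d (c⁻¹ • wC)| := by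
      rw [hd1, abs_mul]
      apply mul_pos _ (abs_pos.2 hdw)
      rw [abs_pos]
      positivity
    exact lt_of_lt_of_le this (hmax hmemK)
  -- u₀ is invertible
  have hunit : IsUnit (LinearMap.toMatrix bH bE u₀.toLinearMap).det := by
    rw [isUnit_iff_ne_zero]
    intro h0
    rw [show d u₀ = (LinearMap.toMatrix bH bE u₀.toLinearMap).det from rfl, h0] at hdpos
    simp at hdpos
  let uhat : H ≃ₗ[ℝ] E := LinearEquiv.ofIsUnitDet hunit
  have huhatcoe : ∀ y : H, uhat y = u₀ y := fun y => by
    rw [show uhat y = (uhat : H →ₗ[ℝ] E) y from rfl, LinearEquiv.coe_ofIsUnitDet]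
    rfl
  let uE : H ≃L[ℝ] E := uhat.toContinuousLinearEquiv
  have huEcoe : ∀ y : H, uE y = u₀ y := huhatcoe
  have huEnorm : ‖(uE : H →L[ℝ] E)‖ ≤ 1 := by
    apply ContinuousLinearMap.opNorm_le_bound _ zero_le_one
    intro y
    rw [show (uE : H →L[ℝ] E) y = u₀ y from huEcoe y]
    exact u₀.le_of_opNorm_le hu₀ y
  refine ⟨uE, huEnorm, ?_⟩
  -- suffices: bound on unit vectors
  suffices hbound : ∀ x : E, ‖x‖ ≤ 1 → ‖uE.symm x‖ ≤ Real.sqrt k by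
    apply ContinuousLinearMap.opNorm_le_bound _ (Real.sqrt_nonneg _)
    intro x
    rcases eq_or_ne x 0 with rfl | hx0
    · simp
    · have hxpos : 0 < ‖x‖ := norm_pos_iff.2 hx0
      have h1 : ‖(uE.symm : E →L[ℝ] H) (‖x‖⁻¹ • x)‖ ≤ Real.sqrt k := by
        apply hbound
        rw [norm_smul, norm_inv, norm_norm, inv_mul_cancel₀ (ne_of_gt hxpos)]
      rw [map_smul, norm_smul, norm_inv, norm_norm] at h1
      calc ‖(uE.symm : E →L[ℝ] H) x‖
          = ‖x‖ * (‖x‖⁻¹ * ‖(uE.symm : E →L[ℝ] H) x‖) := by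
            field_simp
        _ ≤ ‖x‖ * Real.sqrt k := by
            apply mul_le_mul_of_nonneg_left h1 hxpos.le
        _ = Real.sqrt k * ‖x‖ := mul_comm _ _
  intro x hx
  by_contra hcon
  push_neg at hcon
  -- k = 0 is impossible
  rcases Nat.eq_zero_or_pos k with hk0 | hk1
  · subst hk0
    haveI : Subsingleton H := Module.finrank_zero_iff.1 hfinH
    rw [Subsingleton.elim (uE.symm x) 0] at hcon
    simp at hcon
  -- now k ≥ 1
  set s : ℝ := ‖uE.symm x‖ with hsdef
  have hs0 : 0 < s := lt_of_le_of_lt (Real.sqrt_nonneg _) hcon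
  have hsk : (k:ℝ) < s^2 := by
    nlinarith [Real.sq_sqrt (Nat.cast_nonneg k : (0:ℝ) ≤ (k:ℝ)), Real.sqrt_nonneg (k:ℝ)]
  obtain ⟨a, b, ha1, hb0, hab, has, habk⟩ := exists_ab k hk1 s hs0 hsk
  have hs1 : 1 < s := lt_of_le_of_lt ha1 has
  set v : H := uE.symm x with hv
  set vh : H := s⁻¹ • v with hvhdef
  have hvh : ‖vh‖ = 1 := by
    rw [hvhdef, norm_smul, norm_inv, Real.norm_eq_abs, abs_of_pos hs0]
    rw [show ‖v‖ = s from rfl]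
    field_simp
  have hvx : u₀ vh = s⁻¹ • x := by
    rw [← huEcoe vh, hvhdef, map_smul]
    congr 1
    exact uE.apply_symm_apply x
  clear_value vh
  set D : H →L[ℝ] H := (b • ContinuousLinearMap.id ℝ H
      + (a-b) • ((innerSL ℝ vh).smulRight vh)) with hDdef
  have hD : ∀ y : H, D y = b • y + ((a-b) * ⟪vh, y⟫) • vh := by
    intro y
    rw [hDdef]
    simp [ContinuousLinearMap.smulRight_apply, mul_smul]
  clear_value D
  -- determinant of D
  let i₀ : Fin k := ⟨0, hk1⟩
  have horth : Orthonormal ℝ (Set.restrict {i₀} (fun _ : Fin k => vh)) := by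
    constructor
    · intro i; exact hvh
    · intro i j hij
      exact absurd (Subsingleton.elim i j) hij
  obtain ⟨g, hg⟩ := horth.exists_orthonormalBasis_extension_of_card_eq
    (by rw [hfinH, Fintype.card_fin])
  have hgi₀ : g i₀ = vh := hg i₀ (Set.mem_singleton _)
  have hdetD : LinearMap.det (D : H →ₗ[ℝ] H) = a * b^(k-1) := by
    rw [← LinearMap.det_toMatrix g.toBasis]
    have hmat : LinearMap.toMatrix g.toBasis g.toBasis (D : H →ₗ[ℝ] H)
        = Matrix.diagonal (fun j => if j = i₀ then a else b) := by
      ext i j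
      rw [LinearMap.toMatrix_apply]
      rw [show g.toBasis j = g j from congrFun g.coe_toBasis j]
      have hinner : ⟪vh, g j⟫ = if j = i₀ then 1 else 0 := by
        rw [← hgi₀]
        rcases eq_or_ne j i₀ with rfl | hj
        · simp [real_inner_self_eq_norm_sq, hgi₀, hvh]
        · rw [if_neg hj]
          exact g.orthonormal.2 (fun h => hj h.symm)
      have hval : (D : H →ₗ[ℝ] H) (g j)
          = (if j = i₀ then a else b) • g j := by
        rw [show ((D : H →ₗ[ℝ] H) (g j)) = D (g j) from rfl, hD, hinner]
        rcases eq_or_ne j i₀ with rfl | hj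
        · rw [if_pos rfl, if_pos rfl, hgi₀]
          rw [mul_one]
          rw [← add_smul]
          congr 1
          ring
        · rw [if_neg hj, if_neg hj]
          simp
      rw [hval, map_smul]
      rw [show g j = g.toBasis j from (congrFun g.coe_toBasis j).symm, Basis.repr_self]
      rcases eq_or_ne i j with rfl | hij
      · rw [Matrix.diagonal_apply_eq]
        split_ifs <;> simp
      · rw [Matrix.diagonal_apply_ne _ hij]
        split_ifs <;> simp [Finsupp.single_apply, Ne.symm hij]
    rw [hmat, Matrix.det_diagonal]
    rw [← Finset.mul_prod_erase Finset.univ _ (Finset.mem_univ i₀)]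
    rw [if_pos rfl]
    congr 1
    rw [Finset.prod_congr rfl (fun j hj => if_neg (Finset.mem_erase.1 hj).1)]
    rw [Finset.prod_const, Finset.card_erase_of_mem (Finset.mem_univ i₀), Finset.card_univ,
      Fintype.card_fin]
  -- norm bound on the perturbed map, for unit vectors with nonneg inner product
  have hunit_bound : ∀ y : H, ‖y‖ = 1 → 0 ≤ ⟪vh, y⟫ → ‖u₀ (D y)‖ ≤ 1 := by
    intro y hy hc
    obtain ⟨t, htdef⟩ : ∃ t : ℝ, ⟪vh, y⟫ = t := ⟨_, rfl⟩
    rw [htdef] at hc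
    have ht1 : t ≤ 1 := by
      calc t ≤ ‖vh‖ * ‖y‖ := htdef ▸ real_inner_le_norm _ _
        _ = 1 := by rw [hvh, hy, one_mul]
    obtain ⟨l, hl0, hl1, hlkey⟩ := key_lambda s a b t hs1 ha1 hb0 hab has hc ht1
    set w : H := y - t • vh with hw
    have hvv : ⟪vh, vh⟫ = 1 := by
      rw [real_inner_self_eq_norm_sq, hvh]; norm_num
    have hvw : ⟪vh, w⟫ = 0 := by
      rw [hw, inner_sub_right, real_inner_smul_right, hvv, htdef]
      ring
    have hyy : ⟪y, y⟫ = 1 := by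
      rw [real_inner_self_eq_norm_sq, hy]; norm_num
    have hyv : ⟪y, vh⟫ = t := by rw [← htdef]; exact real_inner_comm vh y
    have hw2 : ‖w‖^2 = 1 - t^2 := by
      have h1 : ⟪w, w⟫ = 1 - t^2 := by
        rw [hw]
        simp only [inner_sub_left, inner_sub_right, real_inner_smul_left,
          real_inner_smul_right, hyy, hyv, hvv, htdef]
        ring
      rw [← real_inner_self_eq_norm_sq]
      exact h1
    have hDy : D y = (a*t) • vh + b • w := by
      rw [hD y, htdef, hw]
      module
    have hperp : ⟪(a*t - l*s) • vh, b • w⟫ = 0 := by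
      rw [real_inner_smul_left, real_inner_smul_right, hvw]
      ring
    have hnormsum : ‖(a*t - l*s) • vh + b • w‖^2 = (a*t-l*s)^2 + b^2*(1-t^2) := by
      rw [norm_add_sq_real, hperp, norm_smul, norm_smul, hvh]
      rw [Real.norm_eq_abs, Real.norm_eq_abs, mul_one, mul_pow, sq_abs, sq_abs, hw2]
      ring
    have h1l : 0 < 1 - l := by linarith
    have hle : ‖(a*t - l*s) • vh + b • w‖ ≤ 1 - l := by
      nlinarith [norm_nonneg ((a*t - l*s) • vh + b • w)]
    set z : H := (1-l)⁻¹ • ((a*t - l*s) • vh + b • w) with hz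
    have hzle : ‖z‖ ≤ 1 := by
      rw [hz, norm_smul, norm_inv, Real.norm_eq_abs, abs_of_pos h1l]
      rw [inv_mul_le_one₀ h1l]
      simpa using hle
    have hdecomp : u₀ (D y) = l • x + (1-l) • u₀ z := by
      rw [hz, map_smul, smul_smul, mul_inv_cancel₀ (ne_of_gt h1l), one_smul]
      rw [hDy]
      simp only [map_add, map_smul, hvx]
      rw [smul_smul, smul_smul, ← add_assoc, ← add_smul]
      congr 1
      field_simp
      congr 1; ring
    calc ‖u₀ (D y)‖ = ‖l • x + (1-l) • u₀ z‖ := by rw [hdecomp]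
      _ ≤ ‖l • x‖ + ‖(1-l) • u₀ z‖ := norm_add_le _ _
      _ ≤ l * 1 + (1-l) * 1 := by
          apply add_le_add
          · rw [norm_smul, Real.norm_eq_abs, abs_of_nonneg hl0]
            exact mul_le_mul_of_nonneg_left hx hl0
          · rw [norm_smul, Real.norm_eq_abs, abs_of_pos h1l]
            apply mul_le_mul_of_nonneg_left _ h1l.le
            calc ‖u₀ z‖ ≤ ‖u₀‖ * ‖z‖ := u₀.le_opNorm z
              _ ≤ 1 * 1 := mul_le_mul hu₀ hzle (norm_nonneg _) zero_le_one
              _ = 1 := one_mul 1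
      _ = 1 := by ring
  -- the perturbed map lies in the ball
  have hu'norm : ‖u₀.comp D‖ ≤ 1 := by
    apply ContinuousLinearMap.opNorm_le_bound _ zero_le_one
    intro y
    rcases eq_or_ne y 0 with rfl | hy0
    · simp
    have hypos : 0 < ‖y‖ := norm_pos_iff.2 hy0
    have hy1 : ‖(‖y‖⁻¹ • y : H)‖ = 1 := by
      rw [norm_smul, norm_inv, norm_norm, inv_mul_cancel₀ (ne_of_gt hypos)]
    have hkey : ∀ y' : H, ‖y'‖ = 1 → ‖u₀ (D y')‖ ≤ 1 := by
      intro y' hy'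
      rcases le_or_gt 0 (⟪vh, y'⟫ : ℝ) with hc | hc
      · exact hunit_bound y' hy' hc
      · have h2 := hunit_bound (-y') (by rw [norm_neg, hy'])
          (by rw [inner_neg_right]; linarith)
        rwa [map_neg, map_neg, norm_neg] at h2
    have h3 := hkey (‖y‖⁻¹ • y) hy1
    rw [map_smul, map_smul, norm_smul, norm_inv, norm_norm] at h3
    rw [ContinuousLinearMap.comp_apply, one_mul]
    calc ‖u₀ (D y)‖ = ‖y‖ * (‖y‖⁻¹ * ‖u₀ (D y)‖) := by field_simp
      _ ≤ ‖y‖ * 1 := mul_le_mul_of_nonneg_left h3 hypos.le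
      _ = ‖y‖ := mul_one _
  -- determinant increases: contradiction
  have hdu' : |d (u₀.comp D)| = (a*b^(k-1)) * |d u₀| := by
    show |(LinearMap.toMatrix bH bE ((u₀.comp D) : H →ₗ[ℝ] E)).det| = _
    rw [show ((u₀.comp D) : H →ₗ[ℝ] E) = (u₀ : H →ₗ[ℝ] E).comp (D : H →ₗ[ℝ] H) from rfl]
    rw [LinearMap.toMatrix_comp bH bH bE, Matrix.det_mul, abs_mul]
    rw [LinearMap.det_toMatrix, hdetD]
    rw [abs_of_pos (lt_trans one_pos habk)]
    ring
  have hcontra : |d (u₀.comp D)| ≤ |d u₀| :=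
    hmax (by rw [Metric.mem_closedBall, dist_zero_right]; exact hu'norm)
  rw [hdu'] at hcontra
  nlinarith



/-- A factorization `T = A ∘ B` of an operator through a (real) Hilbert space `H`. -/
structure HilbertFactorization {X Y : Type} [NormedAddCommGroup X] [NormedSpace ℝ X]
    [NormedAddCommGroup Y] [NormedSpace ℝ Y] (T : X →L[ℝ] Y) where
  H : Type
  [grp : NormedAddCommGroup H]
  [ip : InnerProductSpace ℝ H]
  B : X →L[ℝ] H
  A : H →L[ℝ] Y
  eq : A.comp B = T

/-- The quantity `‖A‖ * ‖B‖` of a Hilbert space factorization. -/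
noncomputable def HilbertFactorization.c {X Y : Type} [NormedAddCommGroup X]
    [NormedSpace ℝ X] [NormedAddCommGroup Y] [NormedSpace ℝ Y] {T : X →L[ℝ] Y}
    (F : HilbertFactorization T) : ℝ :=
  letI := F.grp
  letI := F.ip
  ‖F.A‖ * ‖F.B‖

/-- The factorization constant `γ₂(T)` of an operator through Hilbert space. -/
noncomputable def gamma2 {X Y : Type} [NormedAddCommGroup X] [NormedSpace ℝ X]
    [NormedAddCommGroup Y] [NormedSpace ℝ Y] (T : X →L[ℝ] Y) : ℝ :=
  sInf (Set.range fun F : HilbertFactorization T => F.c)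

/-- The Banach–Mazur distance of a normed space `E` from the Euclidean space of its
(finite) dimension: the infimum of `‖u‖ * ‖u⁻¹‖` over isomorphisms. -/
noncomputable def euclDist (E : Type) [NormedAddCommGroup E] [NormedSpace ℝ E] : ℝ :=
  sInf {c : ℝ | ∃ u : E ≃L[ℝ] EuclideanSpace ℝ (Fin (Module.finrank ℝ E)),
    c = ‖(u : E →L[ℝ] EuclideanSpace ℝ (Fin (Module.finrank ℝ E)))‖ *
        ‖(u.symm : EuclideanSpace ℝ (Fin (Module.finrank ℝ E)) →L[ℝ] E)‖}

/-- A (two-sided, not necessarily closed) ideal in the algebra `L(X)`. -/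
def IsOpIdeal {X : Type} [NormedAddCommGroup X] [NormedSpace ℝ X]
    (I : Set (X →L[ℝ] X)) : Prop :=
  (0 : X →L[ℝ] X) ∈ I ∧ (∀ S ∈ I, ∀ T ∈ I, S + T ∈ I) ∧
    (∀ c : ℝ, ∀ S ∈ I, c • S ∈ I) ∧
    ∀ A : X →L[ℝ] X, ∀ S ∈ I, A.comp S ∈ I ∧ S.comp A ∈ I

/-- A closed two-sided ideal in the Banach algebra `L(X)`. -/
def IsClosedOpIdeal {X : Type} [NormedAddCommGroup X] [NormedSpace ℝ X]
    (I : Set (X →L[ℝ] X)) : Prop :=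
  IsClosed I ∧ IsOpIdeal I

lemma HilbertFactorization.c_nonneg {X Y : Type} [NormedAddCommGroup X]
    [NormedSpace ℝ X] [NormedAddCommGroup Y] [NormedSpace ℝ Y] {T : X →L[ℝ] Y}
    (F : HilbertFactorization T) : 0 ≤ F.c := by
  unfold HilbertFactorization.c
  letI := F.grp
  letI := F.ip
  exact mul_nonneg (norm_nonneg _) (norm_nonneg _)

theorem stmt_5 (X Y : Type) [NormedAddCommGroup X] [NormedSpace ℝ X]
    [NormedAddCommGroup Y] [NormedSpace ℝ Y] (T : X →L[ℝ] Y) (k : ℕ)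
    [FiniteDimensional ℝ (LinearMap.range (T : X →ₗ[ℝ] Y))]
    (hk : Module.finrank ℝ (LinearMap.range (T : X →ₗ[ℝ] Y)) = k) :
    gamma2 T ≤ Real.sqrt k * ‖T‖ := by
  classical
  set E := LinearMap.range (T : X →ₗ[ℝ] Y)
  obtain ⟨u, hu1, hu2⟩ := john E k hk
  have hmem : ∀ x : X, T x ∈ E := fun x => LinearMap.mem_range_self _ x
  let T₀ : X →L[ℝ] E := T.codRestrict E hmem
  have hT₀ : ‖T₀‖ ≤ ‖T‖ := by
    apply ContinuousLinearMap.opNorm_le_bound _ (norm_nonneg T)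
    intro x
    exact T.le_opNorm x
  let F : HilbertFactorization T :=
    { H := EuclideanSpace ℝ (Fin k)
      B := (u.symm : E →L[ℝ] EuclideanSpace ℝ (Fin k)).comp T₀
      A := E.subtypeL.comp (u : EuclideanSpace ℝ (Fin k) →L[ℝ] E)
      eq := by
        ext x
        simp [T₀] }
  have hFc : F.c ≤ Real.sqrt k * ‖T‖ := by
    have hA : ‖F.A‖ ≤ 1 := by
      refine le_trans (ContinuousLinearMap.opNorm_comp_le _ _) ?_
      calc ‖E.subtypeL‖ * ‖(u : EuclideanSpace ℝ (Fin k) →L[ℝ] E)‖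
          ≤ 1 * 1 := mul_le_mul (Submodule.norm_subtypeL_le E) hu1 (norm_nonneg _) zero_le_one
        _ = 1 := one_mul 1
    have hB : ‖F.B‖ ≤ Real.sqrt k * ‖T‖ := by
      refine le_trans (ContinuousLinearMap.opNorm_comp_le _ _) ?_
      exact mul_le_mul hu2 hT₀ (norm_nonneg _) (Real.sqrt_nonneg _)
    calc F.c = ‖F.A‖ * ‖F.B‖ := rfl
      _ ≤ 1 * (Real.sqrt k * ‖T‖) :=
          mul_le_mul hA hB (norm_nonneg _) zero_le_one
      _ = Real.sqrt k * ‖T‖ := one_mul _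
  refine le_trans ?_ hFc
  apply csInf_le
  · exact ⟨0, by rintro _ ⟨F', rfl⟩; exact F'.c_nonneg⟩
  · exact ⟨F, rfl⟩
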